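/- Let n ≥ 1 and let Λ ∈ ℝⁿ be weakly decreasing with Λ_i − Λ_{i+1} ≤ 1 for all 1 ≤ i ≤ n−1, and let m = (Λ₁ + ⋯ + Λ_n)/n be its mean. Then Λ lies in the set m·𝟙 + conv{σ·ρ : σ ∈ S_n}, the translate by the constant vector m·𝟙 of the convex hull of the orbit of the Weyl vector ρ under the symmetric group S_n permuting coordinates. -/

import Mathlib

open Finset

private lemma aux_eq_of_sum_gaps {n : ℕ} (hn : 0 < n) (u v : Fin n → ℝ)
    (hs : ∑ i, u i = ∑ i, v i)
    (hg : ∀ i j : Fin n, (i : ℕ) + 1 = (j : ℕ) → u i - u j = v i - v j) : u = v := by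
  have key : ∀ k (hk : k < n), u ⟨k, hk⟩ - v ⟨k, hk⟩ = u ⟨0, hn⟩ - v ⟨0, hn⟩ := by
    intro k
    induction k with
    | zero => intro hk; rfl
    | succ k ih =>
      intro hk
      have hk' : k < n := by omega
      have h1 := hg ⟨k, hk'⟩ ⟨k + 1, hk⟩ rfl
      have h2 := ih hk'
      linarith
  have hall : ∀ i : Fin n, u i - v i = u ⟨0, hn⟩ - v ⟨0, hn⟩ := by
    intro i
    have := key i.1 i.2
    simpa using this
  have hsum0 : ∑ i : Fin n, (u i - v i) = 0 := by
    rw [Finset.sum_sub_distrib, hs, sub_self]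
  have hcard : ∑ i : Fin n, (u i - v i) = (n : ℝ) * (u ⟨0, hn⟩ - v ⟨0, hn⟩) := by
    rw [Finset.sum_congr rfl fun i _ => hall i]
    simp [mul_comm]
    ring
  have hc : u ⟨0, hn⟩ - v ⟨0, hn⟩ = 0 := by
    have hn' : (n : ℝ) ≠ 0 := by positivity
    have h := hsum0.symm.trans hcard
    rcases mul_eq_zero.mp h.symm with h' | h'
    · exact absurd h' hn'
    · exact h'
  funext i
  have := hall i
  rw [hc] at this
  linarith

theorem infinitesimal_character_mem_translated_hull
    (n : ℕ) (hn : 1 ≤ n) (Λ : Fin n → ℝ)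
    (hdec : ∀ i j : Fin n, i ≤ j → Λ j ≤ Λ i)
    (hgap : ∀ i j : Fin n, (i : ℕ) + 1 = (j : ℕ) → Λ i - Λ j ≤ 1)
    (m : ℝ) (hm : m = (∑ i, Λ i) / n) :
    ∃ w ∈ convexHull ℝ
        {w : Fin n → ℝ | ∃ σ : Equiv.Perm (Fin n),
          w = fun i => ((n : ℝ) + 1 - 2 * ((σ i : ℕ) + 1)) / 2},
      Λ = (fun _ => m) + w := by
  haveI : NeZero n := ⟨by omega⟩
  have hnR : (0:ℝ) < n := by positivity
  have hnR' : (n : ℝ) ≠ 0 := ne_of_gt hnR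
  set L : ℕ → ℝ := fun k => if h : k < n then Λ ⟨k, h⟩ else 0 with hL
  set r : Fin n → ℝ := fun j => ((n : ℝ) - 1 - 2 * (j : ℕ)) / 2 with hr
  set z : Fin n → Fin n → ℝ := fun t i => r (i + t) with hz
  set b : Fin n → ℝ := fun t => (1 - (L (n - 1 - (t : ℕ)) - L (n - (t : ℕ)))) / n with hb
  set a : Fin n → ℝ := fun t =>
    if t = 0 then 1 - ∑ s ∈ Finset.univ.erase (0 : Fin n), b s else b t with ha
  -- bounds on b for t ≠ 0
  have hbrange : ∀ t : Fin n, t ≠ 0 → 0 ≤ b t ∧ b t ≤ 1 / n := by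
    intro t ht
    have htv : 1 ≤ (t : ℕ) := by
      rcases Nat.eq_zero_or_pos (t : ℕ) with h | h
      · exact absurd (Fin.ext (by simpa using h)) ht
      · omega
    have htn : (t : ℕ) < n := t.2
    have hi' : n - 1 - (t : ℕ) < n := by omega
    have hj' : n - (t : ℕ) < n := by omega
    have hLd : L (n - 1 - (t : ℕ)) = Λ ⟨n - 1 - (t : ℕ), hi'⟩ := by simp [hL, hi']
    have hLd' : L (n - (t : ℕ)) = Λ ⟨n - (t : ℕ), hj'⟩ := by simp [hL, hj']
    have hij : (n - 1 - (t : ℕ)) + 1 = n - (t : ℕ) := by omega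
    have h1 : Λ ⟨n - 1 - (t : ℕ), hi'⟩ - Λ ⟨n - (t : ℕ), hj'⟩ ≤ 1 :=
      hgap _ _ (by simpa using hij)
    have h2 : Λ ⟨n - (t : ℕ), hj'⟩ ≤ Λ ⟨n - 1 - (t : ℕ), hi'⟩ :=
      hdec _ _ (by simp only [Fin.le_def]; omega)
    constructor
    · apply div_nonneg _ (le_of_lt hnR)
      rw [hLd, hLd']; linarith
    · rw [hb]
      have hnum : 1 - (L (n - 1 - (t : ℕ)) - L (n - (t : ℕ))) ≤ 1 := by
        rw [hLd, hLd']; linarith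
      exact div_le_div_of_nonneg_right hnum hnR.le
  -- nonnegativity of a
  have hanneg : ∀ t : Fin n, 0 ≤ a t := by
    intro t
    by_cases ht : t = 0
    · simp only [ha, if_pos ht]
      have hS : ∑ s ∈ Finset.univ.erase (0 : Fin n), b s ≤
          (Finset.univ.erase (0 : Fin n)).card • (1 / (n:ℝ)) :=
        Finset.sum_le_card_nsmul _ _ _ (fun s hs => (hbrange s (Finset.ne_of_mem_erase hs)).2)
      have hcard : (Finset.univ.erase (0 : Fin n)).card = n - 1 := by
        rw [Finset.card_erase_of_mem (Finset.mem_univ _), Finset.card_univ, Fintype.card_fin]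
      rw [hcard, nsmul_eq_mul] at hS
      have h1 : ((n - 1 : ℕ) : ℝ) ≤ (n : ℝ) := by exact_mod_cast Nat.sub_le n 1
      have h2 : ((n - 1 : ℕ) : ℝ) * (1 / n) ≤ (n : ℝ) * (1 / n) :=
        mul_le_mul_of_nonneg_right h1 (by positivity)
      have h3 : ((n - 1 : ℕ) : ℝ) * (1 / n) ≤ 1 := by
        rw [mul_one_div, div_le_one hnR]; exact h1
      linarith
    · simp only [ha, if_neg ht]
      exact (hbrange t ht).1
  -- sum of weights is 1
  have hasum : ∑ t, a t = 1 := by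
    rw [← Finset.add_sum_erase _ a (Finset.mem_univ (0 : Fin n))]
    have h1 : a 0 = 1 - ∑ s ∈ Finset.univ.erase (0 : Fin n), b s := by
      simp only [ha, if_pos rfl]
    have h2 : ∑ s ∈ Finset.univ.erase (0 : Fin n), a s
        = ∑ s ∈ Finset.univ.erase (0 : Fin n), b s := by
      apply Finset.sum_congr rfl
      intro s hs
      simp only [ha, if_neg (Finset.ne_of_mem_erase hs)]
    rw [h1, h2]; ring
  -- sum of r is 0
  have hrsum : ∑ j, r j = 0 := by
    simp only [hr]
    rw [← Finset.sum_div]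
    have h1 : ∑ j : Fin n, ((n : ℝ) - 1 - 2 * (j : ℕ))
        = (n : ℝ) * ((n : ℝ) - 1) - 2 * ∑ j : Fin n, ((j : ℕ) : ℝ) := by
      rw [Finset.sum_sub_distrib, Finset.sum_const, Finset.card_univ, Fintype.card_fin,
        nsmul_eq_mul, ← Finset.mul_sum]
    have h2 : ∑ j : Fin n, ((j : ℕ) : ℝ) = (n : ℝ) * ((n : ℝ) - 1) / 2 := by
      rw [Fin.sum_univ_eq_sum_range (fun i => ((i : ℕ) : ℝ))]
      have := Finset.sum_range_id_mul_two n
      have hc : ((∑ i ∈ Finset.range n, i : ℕ) : ℝ) * 2 = (n : ℝ) * ((n : ℝ) - 1) := by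
        rw [← Nat.cast_ofNat, ← Nat.cast_mul, this]
        push_cast [Nat.cast_sub hn]
        ring
      rw [← Nat.cast_sum]
      linarith
    rw [h1, h2]
    ring
  -- each z t is in the orbit set
  have hzmem : ∀ t : Fin n, z t ∈ {w : Fin n → ℝ | ∃ σ : Equiv.Perm (Fin n),
      w = fun i => ((n : ℝ) + 1 - 2 * ((σ i : ℕ) + 1)) / 2} := by
    intro t
    refine ⟨Equiv.addRight t, ?_⟩
    funext i
    simp only [hz, hr, Equiv.coe_addRight]
    ring
  set x : Fin n → ℝ := fun i => Λ i - m with hx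
  have hxsum : ∑ i, x i = 0 := by
    simp only [hx]
    rw [Finset.sum_sub_distrib, Finset.sum_const, Finset.card_univ, Fintype.card_fin,
      nsmul_eq_mul, hm]
    field_simp
    ring
  have hfsum : ∑ i, (∑ t, a t • z t) i = 0 := by
    simp only [Finset.sum_apply, Pi.smul_apply, smul_eq_mul]
    rw [Finset.sum_comm]
    have hz0 : ∀ t : Fin n, ∑ i, a t * z t i = 0 := by
      intro t
      rw [← Finset.mul_sum]
      have hzz : ∑ i, z t i = 0 := by
        simp only [hz]
        calc ∑ i, r (i + t) = ∑ i, r ((Equiv.addRight t) i) := by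
              simp [Equiv.coe_addRight]
          _ = ∑ i, r i := Equiv.sum_comp _ _
          _ = 0 := hrsum
      rw [hzz, mul_zero]
    rw [Finset.sum_congr rfl (fun t _ => hz0 t), Finset.sum_const, smul_zero]
  have hgapkey : ∀ i j : Fin n, (i : ℕ) + 1 = (j : ℕ) →
      x i - x j = (∑ t, a t • z t) i - (∑ t, a t • z t) j := by
    intro i j hij
    have hjlt : (j : ℕ) < n := j.2
    have hilt : (i : ℕ) < n - 1 := by omega
    set t₀ : Fin n := ⟨n - 1 - (i : ℕ), by omega⟩ with ht₀
    have hcoord : ∀ t : Fin n, z t i - z t j = 1 - (if t = t₀ then (n : ℝ) else 0) := by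
      intro t
      have hvi : ((i + t : Fin n) : ℕ) = ((i : ℕ) + (t : ℕ)) % n := Fin.val_add _ _
      have hvj : ((j + t : Fin n) : ℕ) = ((j : ℕ) + (t : ℕ)) % n := Fin.val_add _ _
      simp only [hz, hr]
      rw [hvi, hvj]
      by_cases ht : t = t₀
      · rw [ht, if_pos rfl]
        have htv : (t₀ : ℕ) = n - 1 - (i : ℕ) := rfl
        have e1 : (i : ℕ) + (n - 1 - (i : ℕ)) = n - 1 := by omega
        have e2 : (j : ℕ) + (n - 1 - (i : ℕ)) = n := by omega
        have h1 : ((i : ℕ) + (t₀ : ℕ)) % n = n - 1 := by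
          rw [htv, e1, Nat.mod_eq_of_lt (by omega)]
        have h2 : ((j : ℕ) + (t₀ : ℕ)) % n = 0 := by
          rw [htv, e2, Nat.mod_self]
        rw [h1, h2]
        push_cast [Nat.cast_sub hn]
        ring
      · rw [if_neg ht]
        have htv : (t : ℕ) ≠ n - 1 - (i : ℕ) := by
          intro h; exact ht (Fin.ext h)
        have htlt : (t : ℕ) < n := t.2
        rcases lt_or_ge ((i : ℕ) + (t : ℕ)) n with h | h
        · have h1 : ((i : ℕ) + (t : ℕ)) % n = (i : ℕ) + (t : ℕ) := Nat.mod_eq_of_lt h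
          have h2 : ((j : ℕ) + (t : ℕ)) % n = (i : ℕ) + (t : ℕ) + 1 := by
            rw [Nat.mod_eq_of_lt (by omega)]; omega
          rw [h1, h2]
          push_cast; ring
        · have h1 : ((i : ℕ) + (t : ℕ)) % n = (i : ℕ) + (t : ℕ) - n := by
            rw [Nat.mod_eq_sub_mod h, Nat.mod_eq_of_lt (by omega)]
          have h2 : ((j : ℕ) + (t : ℕ)) % n = ((i : ℕ) + (t : ℕ) - n) + 1 := by
            rw [Nat.mod_eq_sub_mod (by omega), Nat.mod_eq_of_lt (by omega)]
            omega
          rw [h1, h2]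
          push_cast [Nat.cast_sub h]
          ring
    have hLHS : (∑ t, a t • z t) i - (∑ t, a t • z t) j = ∑ t, a t * (z t i - z t j) := by
      simp only [Finset.sum_apply, Pi.smul_apply, smul_eq_mul]
      rw [← Finset.sum_sub_distrib]
      exact Finset.sum_congr rfl fun t _ => by ring
    rw [hLHS]
    have hsplit : ∑ t, a t * (z t i - z t j)
        = ∑ t, (a t - (if t = t₀ then a t * n else 0)) := by
      apply Finset.sum_congr rfl
      intro t _
      rw [hcoord t]
      by_cases ht : t = t₀
      · simp [ht]; ring
      · simp [ht]
    rw [hsplit, Finset.sum_sub_distrib, hasum,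
      Finset.sum_ite_eq' Finset.univ t₀ (fun t => a t * n)]
    simp only [Finset.mem_univ, if_true]
    have ht₀ne : t₀ ≠ 0 := by
      intro h
      have hv : (t₀ : ℕ) = 0 := by rw [h]; rfl
      rw [ht₀] at hv
      simp at hv
      omega
    have hat₀ : a t₀ = b t₀ := by simp only [ha, if_neg ht₀ne]
    have hb₀ : b t₀ * n = 1 - (Λ i - Λ j) := by
      have h1 : n - 1 - (t₀ : ℕ) = (i : ℕ) := by
        have : (t₀ : ℕ) = n - 1 - (i : ℕ) := rfl
        omega
      have h2 : n - (t₀ : ℕ) = (j : ℕ) := by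
        have : (t₀ : ℕ) = n - 1 - (i : ℕ) := rfl
        omega
      simp only [hb, h1, h2]
      have hLi : L (i : ℕ) = Λ i := by simp [hL, i.2]
      have hLj : L (j : ℕ) = Λ j := by simp [hL, j.2]
      rw [hLi, hLj, div_mul_cancel₀ _ hnR']
    simp only [hx]
    rw [hat₀, hb₀]
    ring
  refine ⟨x, ?_, ?_⟩
  · have hkey : x = ∑ t, a t • z t :=
      aux_eq_of_sum_gaps (by omega) _ _ (by rw [hxsum, hfsum]) hgapkey
    rw [hkey]
    have hmem := Finset.centerMass_mem_convexHull (Finset.univ : Finset (Fin n))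
      (fun t _ => hanneg t) (by rw [hasum]; norm_num) (fun t _ => hzmem t)
    rwa [Finset.centerMass_eq_of_sum_1 _ _ hasum] at hmem
  · funext i
    simp only [Pi.add_apply, hx]
    ring
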